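/- arXiv:1707.00841 — 5 statements merged into one kernel-verified Lean document; each statement's English description precedes it below -/
import Mathlib

section
/- Every solution of the functional differential equation x'(t) + m·x(−t) = 0 on ℝ, with m a nonzero real constant, is of the form u(t) = a·(cos(m t) − sin(m t)) for some real constant a. -/
theorem stmt_0 (m : ℝ) (hm : m ≠ 0) (x : ℝ → ℝ) (hx : Differentiable ℝ x)
    (heq : ∀ t : ℝ, deriv x t + m * x (-t) = 0) :
    ∃ a : ℝ, ∀ t : ℝ, x t = a * (Real.cos (m * t) - Real.sin (m * t)) := by
  set a := x 0 with ha
  refine ⟨a, fun t => ?_⟩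
  -- derivative of x
  have hx' : ∀ t : ℝ, HasDerivAt x (-m * x (-t)) t := by
    intro t
    have h1 := (hx t).hasDerivAt
    have h2 : deriv x t = -m * x (-t) := by linarith [heq t]
    rwa [h2] at h1
  -- the candidate solution u
  set u : ℝ → ℝ := fun s => a * (Real.cos (m * s) - Real.sin (m * s)) with hu
  have hu' : ∀ s : ℝ, HasDerivAt u (a * (-m * Real.sin (m * s) - m * Real.cos (m * s))) s := by
    intro s
    have hms : HasDerivAt (fun s : ℝ => m * s) m s := by
      simpa using (hasDerivAt_id s).const_mul m
    have hc : HasDerivAt (fun s : ℝ => Real.cos (m * s)) (-Real.sin (m * s) * m) s :=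
      (Real.hasDerivAt_cos (m * s)).comp s hms
    have hsn : HasDerivAt (fun s : ℝ => Real.sin (m * s)) (Real.cos (m * s) * m) s :=
      (Real.hasDerivAt_sin (m * s)).comp s hms
    have := ((hc.sub hsn).const_mul a)
    refine this.congr_deriv ?_
    ring
  have hu'' : ∀ s : ℝ,
      HasDerivAt (fun s => a * (-m * Real.sin (m * s) - m * Real.cos (m * s)))
        (-(m^2) * u s) s := by
    intro s
    have hms : HasDerivAt (fun s : ℝ => m * s) m s := by
      simpa using (hasDerivAt_id s).const_mul m
    have hc : HasDerivAt (fun s : ℝ => Real.cos (m * s)) (-Real.sin (m * s) * m) s :=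
      (Real.hasDerivAt_cos (m * s)).comp s hms
    have hsn : HasDerivAt (fun s : ℝ => Real.sin (m * s)) (Real.cos (m * s) * m) s :=
      (Real.hasDerivAt_sin (m * s)).comp s hms
    have := (((hsn.const_mul (-m)).sub (hc.const_mul m)).const_mul a)
    refine this.congr_deriv ?_
    simp [hu]
    ring
  -- h = x - u, with derivative D
  set D : ℝ → ℝ := fun s => -m * x (-s) - a * (-m * Real.sin (m * s) - m * Real.cos (m * s))
    with hD
  set h : ℝ → ℝ := fun s => x s - u s with hh
  have hh' : ∀ s : ℝ, HasDerivAt h (D s) s := fun s => (hx' s).sub (hu' s)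
  -- second derivative: derivative of s ↦ x(-s) is m * x s
  have hxneg : ∀ s : ℝ, HasDerivAt (fun s : ℝ => x (-s)) (m * x s) s := by
    intro s
    have := (hx' (-s)).comp s (hasDerivAt_neg s)
    exact this.congr_deriv (by rw [neg_neg]; ring)
  have hD' : ∀ s : ℝ, HasDerivAt D (-(m^2) * h s) s := by
    intro s
    have h1 : HasDerivAt (fun s : ℝ => -m * x (-s)) (-m * (m * x s)) s :=
      (hxneg s).const_mul (-m)
    have := h1.sub (hu'' s)
    refine this.congr_deriv ?_
    simp [hh]
    ring
  -- energy
  set E : ℝ → ℝ := fun s => m^2 * (h s)^2 + (D s)^2 with hE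
  have hE' : ∀ s : ℝ, HasDerivAt E 0 s := by
    intro s
    have h1 : HasDerivAt (fun s => (h s)^2) (2 * h s * D s) s := by
      simp only [pow_two]
      refine ((hh' s).mul (hh' s)).congr_deriv ?_
      ring
    have h2 : HasDerivAt (fun s => (D s)^2) (2 * D s * (-(m^2) * h s)) s := by
      simp only [pow_two]
      refine ((hD' s).mul (hD' s)).congr_deriv ?_
      ring
    have := (h1.const_mul (m^2)).add h2
    refine this.congr_deriv ?_
    ring
  have hEconst : ∀ s : ℝ, E s = E 0 := by
    intro s
    have : ∀ y, deriv E y = 0 := fun y => (hE' y).deriv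
    exact is_const_of_deriv_eq_zero (fun y => (hE' y).differentiableAt) this s 0
  have hE0 : E 0 = 0 := by
    have h0 : h 0 = 0 := by simp [hh, hu, ha]
    have hD0 : D 0 = 0 := by simp [hD]; ring
    simp [hE, h0, hD0]
  have hEt := hEconst t
  rw [hE0] at hEt
  simp only [hE] at hEt
  have hm2 : (0:ℝ) < m^2 := by positivity
  have hle : m^2 * h t ^ 2 ≤ 0 := by nlinarith [sq_nonneg (D t)]
  have hzero : m^2 * h t ^ 2 = 0 :=
    le_antisymm hle (mul_nonneg hm2.le (sq_nonneg _))
  have hht : h t = 0 := by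
    rcases mul_eq_zero.mp hzero with h1 | h1
    · exact absurd h1 (by positivity)
    · exact pow_eq_zero_iff two_ne_zero |>.mp h1
  have : x t - u t = 0 := hht
  simpa [hu] using sub_eq_zero.mp this
end

section
/- Define the antiperiodic Green's function with reflection Ĥ(t,s) by 2cos(mT)·Ĥ(t,s) = sin(m(−T+s+t)) + cos(m(−T−s+t)) if t>|s|; = sin(m(−T+s+t)) − cos(m(−T+s−t)) if |t|<s; = sin(m(−T−s−t)) + cos(m(−T−s+t)) if −|t|>s; = sin(m(−T−s−t)) − cos(m(−T+s−t)) if t<−|s|. Then Ĥ(t,s) = Ĥ(−s,−t) for all t,s ∈ [−T,T] with |t| ≠ |s|. -/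
theorem stmt_10 (m T : ℝ) (hT : 0 < T) (hc : Real.cos (m * T) ≠ 0)
    (Hh : ℝ → ℝ → ℝ)
    (h1 : ∀ t s, |s| < t → 2 * Real.cos (m * T) * Hh t s =
        Real.sin (m * (-T + s + t)) + Real.cos (m * (-T - s + t)))
    (h2 : ∀ t s, |t| < s → 2 * Real.cos (m * T) * Hh t s =
        Real.sin (m * (-T + s + t)) - Real.cos (m * (-T + s - t)))
    (h3 : ∀ t s, s < -|t| → 2 * Real.cos (m * T) * Hh t s =
        Real.sin (m * (-T - s - t)) + Real.cos (m * (-T - s + t)))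
    (h4 : ∀ t s, t < -|s| → 2 * Real.cos (m * T) * Hh t s =
        Real.sin (m * (-T - s - t)) - Real.cos (m * (-T + s - t)))
    :
    ∀ t ∈ Set.Icc (-T) T, ∀ s ∈ Set.Icc (-T) T, |t| ≠ |s| → Hh t s = Hh (-s) (-t) := by
  intro t ht s hs hne
  have hc2 : (2 * Real.cos (m * T)) ≠ 0 := by
    simp [hc]
  apply mul_left_cancel₀ hc2
  rcases lt_or_gt_of_ne hne with h | h
  · rcases le_or_gt 0 s with hs0 | hs0
    · rw [abs_of_nonneg hs0] at h
      have hA := h2 t s h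
      have hB := h4 (-s) (-t) (by rw [abs_neg]; linarith)
      rw [hA, hB]; ring_nf
    · rw [abs_of_neg hs0] at h
      have h' : s < -|t| := by linarith
      have hA := h3 t s h'
      have hB := h1 (-s) (-t) (by rw [abs_neg]; linarith)
      rw [hA, hB]; ring_nf
  · rcases le_or_gt 0 t with ht0 | ht0
    · rw [abs_of_nonneg ht0] at h
      have hA := h1 t s h
      have hB := h3 (-s) (-t) (by rw [abs_neg]; linarith)
      rw [hA, hB]; ring_nf
    · rw [abs_of_neg ht0] at h
      have h' : t < -|s| := by linarith
      have hA := h4 t s h'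
      have hB := h2 (-s) (-t) (by rw [abs_neg]; linarith)
      rw [hA, hB]; ring_nf
end

section
/- With Ĥ the antiperiodic Green's function with reflection, the jump across the diagonal equals 1: for every t ∈ (−T,T), lim_{s→t⁻} Ĥ(t,s) − lim_{s→t⁺} Ĥ(t,s) = 1. -/
lemma aux_tendsto_12 (c : ℝ) (hc : c ≠ 0) (g F : ℝ → ℝ) (l : Filter ℝ) (t : ℝ)
    (hl : l ≤ nhds t) (hev : ∀ᶠ s in l, c * g s = F s) (hF : Continuous F) :
    Filter.Tendsto g l (nhds (F t / c)) := by
  have h1 : ∀ᶠ s in l, F s / c = g s := hev.mono fun s hs => by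
    field_simp [hc, ← hs]
    exact hs.symm
  exact (((hF.tendsto t).mono_left hl).div_const c).congr' h1

theorem stmt_12 (m T : ℝ) (hT : 0 < T) (hc : Real.cos (m * T) ≠ 0)
    (Hh : ℝ → ℝ → ℝ)
    (h1 : ∀ t s, |s| < t → 2 * Real.cos (m * T) * Hh t s =
        Real.sin (m * (-T + s + t)) + Real.cos (m * (-T - s + t)))
    (h2 : ∀ t s, |t| < s → 2 * Real.cos (m * T) * Hh t s =
        Real.sin (m * (-T + s + t)) - Real.cos (m * (-T + s - t)))
    (h3 : ∀ t s, s < -|t| → 2 * Real.cos (m * T) * Hh t s =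
        Real.sin (m * (-T - s - t)) + Real.cos (m * (-T - s + t)))
    (h4 : ∀ t s, t < -|s| → 2 * Real.cos (m * T) * Hh t s =
        Real.sin (m * (-T - s - t)) - Real.cos (m * (-T + s - t)))
    :
    ∀ t ∈ Set.Ioo (-T) T, ∃ L₁ L₂ : ℝ,
      Filter.Tendsto (fun s => Hh t s) (nhdsWithin t (Set.Iio t)) (nhds L₁) ∧
      Filter.Tendsto (fun s => Hh t s) (nhdsWithin t (Set.Ioi t)) (nhds L₂) ∧
      L₁ - L₂ = 1 := by
  intro t ht
  set c : ℝ := 2 * Real.cos (m * T) with hcdef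
  have hc' : c ≠ 0 := by simp [hcdef, hc]
  rcases lt_trichotomy t 0 with htneg | htz | htpos
  · -- t < 0 : left uses h3, right uses h4
    set F₁ : ℝ → ℝ := fun s => Real.sin (m * (-T - s - t)) + Real.cos (m * (-T - s + t)) with hF₁
    set F₂ : ℝ → ℝ := fun s => Real.sin (m * (-T - s - t)) - Real.cos (m * (-T + s - t)) with hF₂
    refine ⟨F₁ t / c, F₂ t / c, ?_, ?_, ?_⟩
    · refine aux_tendsto_12 c hc' _ F₁ _ t nhdsWithin_le_nhds ?_ (by fun_prop)
      filter_upwards [self_mem_nhdsWithin] with s hs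
      exact h3 t s (by rw [abs_of_neg htneg]; simpa using hs)
    · refine aux_tendsto_12 c hc' _ F₂ _ t nhdsWithin_le_nhds ?_ (by fun_prop)
      have hIoo : Set.Ioo t 0 ∈ nhdsWithin t (Set.Ioi t) :=
        Ioo_mem_nhdsGT_of_mem ⟨le_refl t, htneg⟩
      filter_upwards [hIoo] with s hs
      exact h4 t s (by rw [abs_of_neg hs.2]; simpa using hs.1)
    · have e1 : m * (-T - t + t) = -(m * T) := by ring
      have e2 : m * (-T + t - t) = -(m * T) := by ring
      simp only [hF₁, hF₂, e1, e2, Real.cos_neg]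
      field_simp [hcdef]
      ring
  · -- t = 0 : left uses h3, right uses h2
    subst htz
    set F₁ : ℝ → ℝ := fun s => Real.sin (m * (-T - s - 0)) + Real.cos (m * (-T - s + 0)) with hF₁
    set F₂ : ℝ → ℝ := fun s => Real.sin (m * (-T + s + 0)) - Real.cos (m * (-T + s - 0)) with hF₂
    refine ⟨F₁ 0 / c, F₂ 0 / c, ?_, ?_, ?_⟩
    · refine aux_tendsto_12 c hc' _ F₁ _ 0 nhdsWithin_le_nhds ?_ (by fun_prop)
      filter_upwards [self_mem_nhdsWithin] with s hs
      exact h3 0 s (by simpa using hs)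
    · refine aux_tendsto_12 c hc' _ F₂ _ 0 nhdsWithin_le_nhds ?_ (by fun_prop)
      filter_upwards [self_mem_nhdsWithin] with s hs
      exact h2 0 s (by simpa using hs)
    · have e1 : m * (-T - 0 - 0) = -(m * T) := by ring
      have e2 : m * (-T - 0 + 0) = -(m * T) := by ring
      have e3 : m * (-T + 0 + 0) = -(m * T) := by ring
      have e4 : m * (-T + 0 - 0) = -(m * T) := by ring
      simp only [hF₁, hF₂, e1, e2, e3, e4, Real.cos_neg]
      field_simp [hcdef]
      ring
  · -- t > 0 : left uses h1, right uses h2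
    set F₁ : ℝ → ℝ := fun s => Real.sin (m * (-T + s + t)) + Real.cos (m * (-T - s + t)) with hF₁
    set F₂ : ℝ → ℝ := fun s => Real.sin (m * (-T + s + t)) - Real.cos (m * (-T + s - t)) with hF₂
    refine ⟨F₁ t / c, F₂ t / c, ?_, ?_, ?_⟩
    · refine aux_tendsto_12 c hc' _ F₁ _ t nhdsWithin_le_nhds ?_ (by fun_prop)
      have hIoo : Set.Ioo (-t) t ∈ nhdsWithin t (Set.Iio t) :=
        Ioo_mem_nhdsLT_of_mem ⟨by linarith, le_refl t⟩
      filter_upwards [hIoo] with s hs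
      exact h1 t s (abs_lt.mpr ⟨by linarith [hs.1], hs.2⟩)
    · refine aux_tendsto_12 c hc' _ F₂ _ t nhdsWithin_le_nhds ?_ (by fun_prop)
      filter_upwards [self_mem_nhdsWithin] with s hs
      exact h2 t s (by rw [abs_of_pos htpos]; exact hs)
    · have e1 : m * (-T - t + t) = -(m * T) := by ring
      have e2 : m * (-T + t - t) = -(m * T) := by ring
      simp only [hF₁, hF₂, e1, e2, Real.cos_neg]
      field_simp [hcdef]
      ring
end

section
/- With Ĥ the antiperiodic Green's function with reflection, for every fixed s ∈ (−T,T) and every t ∈ (−T,T) with |t| ≠ |s|, the reflection equation ∂Ĥ/∂t(t,s) + m·Ĥ(−t,s) = 0 holds. -/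
lemma hs_add (m a t : ℝ) :
    HasDerivAt (fun τ => Real.sin (m * (a + τ))) (m * Real.cos (m * (a + t))) t := by
  have h : HasDerivAt (fun τ : ℝ => m * (a + τ)) m t := by
    simpa using ((hasDerivAt_id t).const_add a).const_mul m
  simpa [mul_comm, Function.comp_def] using (Real.hasDerivAt_sin (m * (a + t))).comp t h

lemma hc_add (m a t : ℝ) :
    HasDerivAt (fun τ => Real.cos (m * (a + τ))) (-(m * Real.sin (m * (a + t)))) t := by
  have h : HasDerivAt (fun τ : ℝ => m * (a + τ)) m t := by
    simpa using ((hasDerivAt_id t).const_add a).const_mul m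
  simpa [mul_comm, Function.comp_def] using (Real.hasDerivAt_cos (m * (a + t))).comp t h

lemma hs_sub (m a t : ℝ) :
    HasDerivAt (fun τ => Real.sin (m * (a - τ))) (-(m * Real.cos (m * (a - t)))) t := by
  have h : HasDerivAt (fun τ : ℝ => m * (a - τ)) (-m) t := by
    simpa using ((hasDerivAt_id t).const_sub a).const_mul m
  simpa [mul_comm, Function.comp_def] using (Real.hasDerivAt_sin (m * (a - t))).comp t h

lemma hc_sub (m a t : ℝ) :
    HasDerivAt (fun τ => Real.cos (m * (a - τ))) (m * Real.sin (m * (a - t))) t := by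
  have h : HasDerivAt (fun τ : ℝ => m * (a - τ)) (-m) t := by
    simpa using ((hasDerivAt_id t).const_sub a).const_mul m
  simpa [mul_comm, Function.comp_def] using (Real.hasDerivAt_cos (m * (a - t))).comp t h

theorem stmt_13 (m T : ℝ) (hT : 0 < T) (hm : m ≠ 0) (hc : Real.cos (m * T) ≠ 0)
    (Hh : ℝ → ℝ → ℝ)
    (h1 : ∀ t s, |s| < t → 2 * Real.cos (m * T) * Hh t s =
        Real.sin (m * (-T + s + t)) + Real.cos (m * (-T - s + t)))
    (h2 : ∀ t s, |t| < s → 2 * Real.cos (m * T) * Hh t s =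
        Real.sin (m * (-T + s + t)) - Real.cos (m * (-T + s - t)))
    (h3 : ∀ t s, s < -|t| → 2 * Real.cos (m * T) * Hh t s =
        Real.sin (m * (-T - s - t)) + Real.cos (m * (-T - s + t)))
    (h4 : ∀ t s, t < -|s| → 2 * Real.cos (m * T) * Hh t s =
        Real.sin (m * (-T - s - t)) - Real.cos (m * (-T + s - t)))
    :
    ∀ s ∈ Set.Ioo (-T) T, ∀ t ∈ Set.Ioo (-T) T, |t| ≠ |s| →
      deriv (fun τ => Hh τ s) t + m * Hh (-t) s = 0 := by
  intro s _ t _ hne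
  have hc2 : (2 * Real.cos (m * T)) ≠ 0 := by positivity
  rcases hne.lt_or_gt with h | h
  · -- |t| < |s|
    rcases lt_abs.mp h with h' | h'
    · -- |t| < s  (case B)
      have hev : (fun τ => Hh τ s) =ᶠ[nhds t] fun τ =>
          (Real.sin (m * (-T + s + τ)) - Real.cos (m * (-T + s - τ))) / (2 * Real.cos (m * T)) := by
        have hop : IsOpen {τ : ℝ | |τ| < s} := isOpen_lt (continuous_abs) continuous_const
        filter_upwards [hop.mem_nhds h'] with τ hτ
        rw [eq_div_iff hc2, mul_comm]
        exact h2 τ s hτ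
      have hd : HasDerivAt
          (fun τ => (Real.sin (m * (-T + s + τ)) - Real.cos (m * (-T + s - τ))) / (2 * Real.cos (m * T)))
          ((m * Real.cos (m * (-T + s + t)) - m * Real.sin (m * (-T + s - t))) / (2 * Real.cos (m * T))) t :=
        ((hs_add m (-T + s) t).sub (hc_sub m (-T + s) t)).div_const _
      rw [hev.deriv_eq, hd.deriv]
      have h2' : Hh (-t) s =
          (Real.sin (m * (-T + s + -t)) - Real.cos (m * (-T + s - -t))) / (2 * Real.cos (m * T)) := by
        rw [eq_div_iff hc2, mul_comm]
        exact h2 (-t) s (by rwa [abs_neg])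
      rw [h2']
      field_simp
      ring_nf
    · -- s < -|t|  (case C)
      have hs' : s < -|t| := by linarith
      have hev : (fun τ => Hh τ s) =ᶠ[nhds t] fun τ =>
          (Real.sin (m * (-T - s - τ)) + Real.cos (m * (-T - s + τ))) / (2 * Real.cos (m * T)) := by
        have hop : IsOpen {τ : ℝ | s < -|τ|} := isOpen_lt continuous_const (continuous_abs.neg)
        filter_upwards [hop.mem_nhds hs'] with τ hτ
        rw [eq_div_iff hc2, mul_comm]
        exact h3 τ s hτ
      have hd : HasDerivAt
          (fun τ => (Real.sin (m * (-T - s - τ)) + Real.cos (m * (-T - s + τ))) / (2 * Real.cos (m * T)))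
          ((-(m * Real.cos (m * (-T - s - t))) + -(m * Real.sin (m * (-T - s + t)))) / (2 * Real.cos (m * T))) t :=
        ((hs_sub m (-T - s) t).add (hc_add m (-T - s) t)).div_const _
      rw [hev.deriv_eq, hd.deriv]
      have h3' : Hh (-t) s =
          (Real.sin (m * (-T - s - -t)) + Real.cos (m * (-T - s + -t))) / (2 * Real.cos (m * T)) := by
        rw [eq_div_iff hc2, mul_comm]
        exact h3 (-t) s (by rwa [abs_neg])
      rw [h3']
      field_simp
      ring_nf
  · -- |s| < |t|
    rcases lt_abs.mp h with h' | h'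
    · -- |s| < t  (case A)
      have hev : (fun τ => Hh τ s) =ᶠ[nhds t] fun τ =>
          (Real.sin (m * (-T + s + τ)) + Real.cos (m * (-T - s + τ))) / (2 * Real.cos (m * T)) := by
        have hop : IsOpen {τ : ℝ | |s| < τ} := isOpen_lt continuous_const continuous_id
        filter_upwards [hop.mem_nhds h'] with τ hτ
        rw [eq_div_iff hc2, mul_comm]
        exact h1 τ s hτ
      have hd : HasDerivAt
          (fun τ => (Real.sin (m * (-T + s + τ)) + Real.cos (m * (-T - s + τ))) / (2 * Real.cos (m * T)))
          ((m * Real.cos (m * (-T + s + t)) + -(m * Real.sin (m * (-T - s + t)))) / (2 * Real.cos (m * T))) t :=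
        ((hs_add m (-T + s) t).add (hc_add m (-T - s) t)).div_const _
      rw [hev.deriv_eq, hd.deriv]
      have h4' : Hh (-t) s =
          (Real.sin (m * (-T - s - -t)) - Real.cos (m * (-T + s - -t))) / (2 * Real.cos (m * T)) := by
        rw [eq_div_iff hc2, mul_comm]
        exact h4 (-t) s (by linarith)
      rw [h4']
      field_simp
      ring_nf
    · -- t < -|s|  (case D)
      have ht' : t < -|s| := by linarith
      have hev : (fun τ => Hh τ s) =ᶠ[nhds t] fun τ =>
          (Real.sin (m * (-T - s - τ)) - Real.cos (m * (-T + s - τ))) / (2 * Real.cos (m * T)) := by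
        have hop : IsOpen {τ : ℝ | τ < -|s|} := isOpen_lt continuous_id continuous_const
        filter_upwards [hop.mem_nhds ht'] with τ hτ
        rw [eq_div_iff hc2, mul_comm]
        exact h4 τ s hτ
      have hd : HasDerivAt
          (fun τ => (Real.sin (m * (-T - s - τ)) - Real.cos (m * (-T + s - τ))) / (2 * Real.cos (m * T)))
          ((-(m * Real.cos (m * (-T - s - t))) - m * Real.sin (m * (-T + s - t))) / (2 * Real.cos (m * T))) t :=
        ((hs_sub m (-T - s) t).sub (hc_sub m (-T + s) t)).div_const _
      rw [hev.deriv_eq, hd.deriv]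
      have h1' : Hh (-t) s =
          (Real.sin (m * (-T + s + -t)) + Real.cos (m * (-T - s + -t))) / (2 * Real.cos (m * T)) := by
        rw [eq_div_iff hc2, mul_comm]
        exact h1 (-t) s (by rw [lt_neg] at ht'; linarith)
      rw [h1']
      field_simp
      ring_nf
end

section
/- The function f(α) = (1/(2α))·(1 + sec α)/(1 + csc α) is strictly decreasing on (0, π/4), with limit 1 as α → 0⁺ and limit 2/π as α → (π/4)⁻. -/
open Real Set Filter

private lemma stmt18_core1 (s c : ℝ) (hs : 0 < s) (hs6 : s ≤ 0.6) (hc : 0 < c)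
    (hpyth : s^2 + c^2 = 1) : s^3 + c^3 + 1 ≤ c^2*((1+s)*(1+c)) := by
  have hc8 : 0.8 ≤ c := by nlinarith
  nlinarith [sq_nonneg (s-c), sq_nonneg (c-1), mul_pos hs hc, sq_nonneg (s - 0.6),
    mul_nonneg (sub_nonneg.2 hc8) hs.le]

private lemma stmt18_core2 (s c : ℝ) (hs : 0.5 ≤ s) (hsc : s ≤ c)
    (hpyth : s^2 + c^2 = 1) : (119/100 : ℝ) * (s^3 + c^3 + 1) ≤ c*((1+s)*(1+c)) := by
  have hc1 : c ≤ 0.867 := by nlinarith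
  have hc2 : 0.7 ≤ c := by nlinarith
  nlinarith [sq_nonneg (s-c), sq_nonneg (c - 0.71),
    mul_nonneg (sub_nonneg.2 hs) (sub_nonneg.2 hsc), sq_nonneg (s+c-1.41)]

private lemma stmt18_core (a : ℝ) (h1 : 0 < a) (h2 : a < π/4) :
    a * (Real.sin a^3 + Real.cos a^3 + 1) <
      Real.sin a * Real.cos a * ((1+Real.sin a) * (1+Real.cos a)) := by
  have hpi : π < 3.15 := by linarith [pi_lt_d2]
  have hpi3 : 3.14 < π := by linarith [pi_gt_d6]
  set s := Real.sin a with hsdef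
  set c := Real.cos a with hcdef
  have hs : 0 < s := sin_pos_of_pos_of_lt_pi h1 (by linarith)
  have hc : 0 < c := cos_pos_of_mem_Ioo ⟨by linarith, by linarith⟩
  have hpyth : s^2 + c^2 = 1 := sin_sq_add_cos_sq a
  have hsa : s < a := sin_lt h1
  have hsc : s < c := by
    have := Real.sin_lt_sin_of_lt_of_le_pi_div_two (x := a) (y := π/2 - a)
      (by linarith) (by linarith) (by linarith)
    rwa [Real.sin_pi_div_two_sub] at this
  have htan : a * c < s := by
    have ht := Real.lt_tan h1 (by linarith)
    rw [Real.tan_eq_sin_div_cos] at ht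
    rw [lt_div_iff₀ hc] at ht
    linarith
  have hP : (0:ℝ) < s^3 + c^3 + 1 := by positivity
  rcases le_or_gt a 0.6 with hcase | hcase
  · have hcore := stmt18_core1 s c hs (by linarith) hc hpyth
    calc a * (s^3+c^3+1) ≤ a * (c^2*((1+s)*(1+c))) := by nlinarith
      _ = (a*c) * (c*((1+s)*(1+c))) := by ring
      _ < s * (c*((1+s)*(1+c))) := by
          apply mul_lt_mul_of_pos_right htan
          positivity
      _ = s*c*((1+s)*(1+c)) := by ring
  · have hcube : a - a^3/4 < s := by
      have := sin_gt_sub_cube h1; linarith [pow_pos h1 3]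
    have ha2 : a^2 < 0.62015625 := by nlinarith
    have h119 : a < (119/100) * s := by nlinarith
    have hs5 : 0.5 ≤ s := by nlinarith
    have hcore := stmt18_core2 s c hs5 hsc.le hpyth
    calc a * (s^3+c^3+1) < ((119/100)*s) * (s^3+c^3+1) :=
          mul_lt_mul_of_pos_right h119 hP
      _ = s * ((119/100) * (s^3+c^3+1)) := by ring
      _ ≤ s * (c*((1+s)*(1+c))) := by nlinarith
      _ = s*c*((1+s)*(1+c)) := by ring

private lemma stmt18_hasDeriv (x : ℝ) (hs : Real.sin x ≠ 0) (hc : Real.cos x ≠ 0)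
    (hD : 2 * x * (1 + 1 / Real.sin x) ≠ 0) :
    HasDerivAt (fun α => (1 + 1 / Real.cos α) / (2 * α * (1 + 1 / Real.sin α)))
      ((Real.sin x / Real.cos x ^ 2 * (2 * x * (1 + 1 / Real.sin x)) -
        (1 + 1 / Real.cos x) * (2 * (1 + 1 / Real.sin x) + 2 * x * (-Real.cos x / Real.sin x ^ 2))) /
        (2 * x * (1 + 1 / Real.sin x)) ^ 2) x := by
  have hN : HasDerivAt (fun α => 1 + 1 / Real.cos α) (Real.sin x / Real.cos x ^ 2) x := by
    have := ((Real.hasDerivAt_cos x).inv hc).const_add 1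
    simpa [one_div, neg_div, neg_neg] using this
  have hu : HasDerivAt (fun α : ℝ => 2 * α) 2 x := by
    simpa using (hasDerivAt_id x).const_mul 2
  have hv : HasDerivAt (fun α => 1 + 1 / Real.sin α) (-Real.cos x / Real.sin x ^ 2) x := by
    have := ((Real.hasDerivAt_sin x).inv hs).const_add 1
    simpa [one_div, neg_div] using this
  have hDd : HasDerivAt (fun α => 2 * α * (1 + 1 / Real.sin α))
      (2 * (1 + 1 / Real.sin x) + 2 * x * (-Real.cos x / Real.sin x ^ 2)) x := by
    exact hu.mul hv
  exact hN.div hDd hD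

private lemma stmt18_numneg (x : ℝ) (h1 : 0 < x) (h2 : x < π/4) :
    Real.sin x / Real.cos x ^ 2 * (2 * x * (1 + 1 / Real.sin x)) -
      (1 + 1 / Real.cos x) * (2 * (1 + 1 / Real.sin x) + 2 * x * (-Real.cos x / Real.sin x ^ 2)) < 0 := by
  have hpi : π < 3.15 := by linarith [pi_lt_d2]
  set s := Real.sin x with hsdef
  set c := Real.cos x with hcdef
  have hs : 0 < s := Real.sin_pos_of_pos_of_lt_pi h1 (by linarith)
  have hc : 0 < c := Real.cos_pos_of_mem_Ioo ⟨by linarith, by linarith⟩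
  have hpyth : s^2 + c^2 = 1 := Real.sin_sq_add_cos_sq x
  have hcore : x * (s^3 + c^3 + 1) < s * c * ((1+s)*(1+c)) := stmt18_core x h1 h2
  have hpos : (0:ℝ) < c^2 * s^2 := by positivity
  rw [sub_neg]
  have L : s / c^2 * (2 * x * (1 + 1/s)) = (2*x*(s+1)*s^2) / (c^2*s^2) := by
    field_simp
  have R : (1 + 1/c) * (2 * (1 + 1/s) + 2*x*(-c/s^2)) =
      (2*c*(c+1)*(s*(s+1) - x*c)) / (c^2*s^2) := by
    field_simp; ring
  rw [L, R, div_lt_div_iff₀ hpos hpos]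
  have hx2 : x * s^2 + x * c^2 = x := by nlinarith
  nlinarith [hcore, hx2]

theorem stmt_18 (f : ℝ → ℝ)
    (hf : ∀ α, f α = (1 + 1 / Real.cos α) / (2 * α * (1 + 1 / Real.sin α))) :
    StrictAntiOn f (Set.Ioo 0 (Real.pi / 4)) ∧
    Filter.Tendsto f (nhdsWithin 0 (Set.Ioi 0)) (nhds 1) ∧
    Filter.Tendsto f (nhdsWithin (Real.pi / 4) (Set.Iio (Real.pi / 4)))
      (nhds (2 / Real.pi)) := by
  have hfun : f = fun α => (1 + 1 / Real.cos α) / (2 * α * (1 + 1 / Real.sin α)) :=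
    funext hf
  have hpi : π < 3.15 := by linarith [pi_lt_d2]
  have hpi3 : 3.14 < π := by linarith [pi_gt_d6]
  -- basic positivity facts on the interval
  have hbasic : ∀ x : ℝ, 0 < x → x < π/4 →
      0 < Real.sin x ∧ 0 < Real.cos x ∧ 0 < 2 * x * (1 + 1 / Real.sin x) := by
    intro x hx1 hx2
    have hs : 0 < Real.sin x := Real.sin_pos_of_pos_of_lt_pi hx1 (by linarith)
    have hc : 0 < Real.cos x := Real.cos_pos_of_mem_Ioo ⟨by linarith, by linarith⟩
    exact ⟨hs, hc, by positivity⟩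
  refine ⟨?_, ?_, ?_⟩
  · -- strict antitonicity
    rw [hfun]
    apply strictAntiOn_of_deriv_neg (convex_Ioo _ _)
    · intro x hx
      obtain ⟨hs, hc, hD⟩ := hbasic x hx.1 hx.2
      exact ((stmt18_hasDeriv x hs.ne' hc.ne' hD.ne').differentiableAt.continuousAt).continuousWithinAt
    · rw [interior_Ioo]
      intro x hx
      obtain ⟨hs, hc, hD⟩ := hbasic x hx.1 hx.2
      rw [(stmt18_hasDeriv x hs.ne' hc.ne' hD.ne').deriv]
      exact div_neg_of_neg_of_pos (stmt18_numneg x hx.1 hx.2) (by positivity)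
  · -- limit at 0⁺
    have h1 : Tendsto (fun α => Real.sin α / α) (nhdsWithin 0 (Set.Ioi 0)) (nhds 1) := by
      have hd := Real.hasDerivAt_sin 0
      rw [Real.cos_zero, hasDerivAt_iff_tendsto_slope] at hd
      have hmono : nhdsWithin (0:ℝ) (Set.Ioi 0) ≤ nhdsWithin 0 {0}ᶜ :=
        nhdsWithin_mono 0 (fun x hx => ne_of_gt hx)
      refine (hd.mono_left hmono).congr ?_
      intro α
      simp [slope_def_field, Real.sin_zero]
    have h2 : Tendsto (fun α => (1 + 1 / Real.cos α) / (2 * (1 + Real.sin α)))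
        (nhdsWithin 0 (Set.Ioi 0)) (nhds 1) := by
      have hca : ContinuousAt (fun α => (1 + 1 / Real.cos α) / (2 * (1 + Real.sin α))) 0 := by
        apply ContinuousAt.div
        · exact continuousAt_const.add
            (continuousAt_const.div Real.continuous_cos.continuousAt (by simp))
        · fun_prop
        · simp
      have h2' : Tendsto (fun α => (1 + 1 / Real.cos α) / (2 * (1 + Real.sin α)))
          (nhdsWithin (0:ℝ) (Set.Ioi 0))
          (nhds ((1 + 1 / Real.cos 0) / (2 * (1 + Real.sin 0)))) :=
        hca.tendsto.mono_left nhdsWithin_le_nhds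
      simpa using h2'
    have heq : (fun α => Real.sin α / α * ((1 + 1 / Real.cos α) / (2 * (1 + Real.sin α))))
        =ᶠ[nhdsWithin (0:ℝ) (Set.Ioi 0)] f := by
      filter_upwards [Ioo_mem_nhdsGT_of_mem (show (0:ℝ) ∈ Set.Ico 0 1 from ⟨le_refl 0, one_pos⟩)]
        with α hα
      have hα1 : 0 < α := hα.1
      have hα2 : α < 1 := hα.2
      have hαne : α ≠ 0 := ne_of_gt hα1
      have hspos : 0 < Real.sin α := Real.sin_pos_of_pos_of_lt_pi hα1 (by linarith)
      have hsne : Real.sin α ≠ 0 := hspos.ne'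
      have hcne : Real.cos α ≠ 0 :=
        (Real.cos_pos_of_mem_Ioo ⟨by linarith, by linarith⟩).ne'
      have h1s : (1:ℝ) + Real.sin α ≠ 0 := by positivity
      rw [hf α]
      field_simp
      ring
    have := (h1.mul h2).congr' heq
    simpa using this
  · -- limit at (π/4)⁻
    have hcos4 : Real.cos (π/4) = Real.sqrt 2 / 2 := Real.cos_pi_div_four
    have hsin4 : Real.sin (π/4) = Real.sqrt 2 / 2 := Real.sin_pi_div_four
    have hsqrt2 : (0:ℝ) < Real.sqrt 2 := by positivity
    have hca : ContinuousAt (fun α => (1 + 1 / Real.cos α) / (2 * α * (1 + 1 / Real.sin α)))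
        (π/4) := by
      apply ContinuousAt.div
      · exact continuousAt_const.add
          (continuousAt_const.div Real.continuous_cos.continuousAt (by rw [hcos4]; positivity))
      · exact ((continuousAt_const.mul continuousAt_id).mul
          (continuousAt_const.add
            (continuousAt_const.div Real.continuous_sin.continuousAt (by rw [hsin4]; positivity))))
      · rw [hsin4]
        positivity
    have hval : (1 + 1 / Real.cos (π/4)) / (2 * (π/4) * (1 + 1 / Real.sin (π/4))) = 2 / π := by
      rw [hcos4, hsin4]
      have h2 : Real.sqrt 2 * Real.sqrt 2 = 2 := Real.mul_self_sqrt (by norm_num)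
      have hne : (1:ℝ) + 1 / (Real.sqrt 2 / 2) ≠ 0 := by positivity
      have hπ : π ≠ 0 := pi_ne_zero
      field_simp
      ring
    rw [hfun]
    have hfin : Tendsto (fun α => (1 + 1 / Real.cos α) / (2 * α * (1 + 1 / Real.sin α)))
        (nhdsWithin (π/4) (Set.Iio (π/4)))
        (nhds ((1 + 1 / Real.cos (π/4)) / (2 * (π/4) * (1 + 1 / Real.sin (π/4))))) :=
      hca.tendsto.mono_left nhdsWithin_le_nhds
    rw [hval] at hfin
    exact hfin
end
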